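/- With c_1, c_2 of degrees 1, 2 and c_j^{-1} the degree-j component of the formal inverse of 1 + c_1 + c_2, the quotient ring ℤ[c_1,c_2]/⟨c_3^{-1}, c_4^{-1}⟩ is a free abelian group of rank 6, with one basis element each in degrees 0, 1, 3, 4 and two in degree 2. -/

import Mathlib

open MvPolynomial

open MvPolynomial

namespace Stmt15Aux
noncomputable section

abbrev P2 : Type := MvPolynomial (Fin 2) ℤ

def ex (a b : ℕ) : Fin 2 →₀ ℕ := Finsupp.single 0 a + Finsupp.single 1 b

@[simp] lemma ex_apply0 (a b : ℕ) : ex a b 0 = a := by simp [ex]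
@[simp] lemma ex_apply1 (a b : ℕ) : ex a b 1 = b := by simp [ex]

lemma eq_ex (m : Fin 2 →₀ ℕ) : m = ex (m 0) (m 1) := by
  ext i; fin_cases i <;> simp

lemma ex_le_iff (a b a' b' : ℕ) : ex a' b' ≤ ex a b ↔ a' ≤ a ∧ b' ≤ b := by
  rw [Finsupp.le_def]
  constructor
  · intro h; exact ⟨by simpa using h 0, by simpa using h 1⟩
  · rintro ⟨h1, h2⟩ i; fin_cases i <;> simpa

lemma ex_sub (a b a' b' : ℕ) : ex a b - ex a' b' = ex (a - a') (b - b') := by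
  ext i; fin_cases i <;> simp [Finsupp.tsub_apply]

def XP (a b : ℕ) : P2 := X 0 ^ a * X 1 ^ b

lemma XP_def (a b : ℕ) : XP a b = X 0 ^ a * X 1 ^ b := rfl

lemma XP_eq_monomial (a b : ℕ) : XP a b = monomial (ex a b) 1 := by
  rw [XP, X_pow_eq_monomial, X_pow_eq_monomial, monomial_mul, one_mul, ex]

lemma coeff_mul_XP (p : P2) (a b a' b' : ℕ) :
    coeff (ex a b) (p * XP a' b') =
      if a' ≤ a ∧ b' ≤ b then coeff (ex (a - a') (b - b')) p else 0 := by
  rw [XP_eq_monomial, coeff_mul_monomial']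
  simp only [mul_one, ex_le_iff, ex_sub]

lemma ex_inj (a b a' b' : ℕ) : ex a b = ex a' b' ↔ a = a' ∧ b = b' := by
  constructor
  · intro h
    exact ⟨by simpa using congrArg (fun m => m 0) h, by simpa using congrArg (fun m => m 1) h⟩
  · rintro ⟨rfl, rfl⟩; rfl

lemma coeff_XP (a b a' b' : ℕ) :
    coeff (ex a b) (XP a' b') = if a' = a ∧ b' = b then 1 else 0 := by
  rw [XP_eq_monomial, coeff_monomial]
  simp only [ex_inj]

def phiC : Fin 6 → (P2 →ₗ[ℤ] ℤ)
  | 0 => lcoeff ℤ (ex 0 0)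
  | 1 => lcoeff ℤ (ex 1 0)
  | 2 => lcoeff ℤ (ex 0 1)
  | 3 => lcoeff ℤ (ex 2 0)
  | 4 => lcoeff ℤ (ex 1 1) + 2 • lcoeff ℤ (ex 3 0)
  | 5 => lcoeff ℤ (ex 0 2) + lcoeff ℤ (ex 2 1) + 2 • lcoeff ℤ (ex 4 0)

def phi : P2 →ₗ[ℤ] (Fin 6 → ℤ) := LinearMap.pi phiC

def f : P2 := 2 * XP 1 1 - XP 3 0
def g : P2 := XP 4 0 + XP 0 2 - 3 * XP 2 1

lemma f_def : f = 2 * XP 1 1 - XP 3 0 := rfl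
lemma g_def : g = XP 4 0 + XP 0 2 - 3 * XP 2 1 := rfl

lemma phi_mul_f (p : P2) : phi (p * f) = 0 := by
  have h : p * f = (p * XP 1 1 + p * XP 1 1) - p * XP 3 0 := by rw [f]; ring
  funext i
  fin_cases i
  · show coeff (ex 0 0) (p * f) = 0
    rw [h]; simp [coeff_sub, coeff_add, coeff_mul_XP]
  · show coeff (ex 1 0) (p * f) = 0
    rw [h]; simp [coeff_sub, coeff_add, coeff_mul_XP]
  · show coeff (ex 0 1) (p * f) = 0
    rw [h]; simp [coeff_sub, coeff_add, coeff_mul_XP]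
  · show coeff (ex 2 0) (p * f) = 0
    rw [h]; simp [coeff_sub, coeff_add, coeff_mul_XP]
  · show coeff (ex 1 1) (p * f) + 2 * coeff (ex 3 0) (p * f) = 0
    rw [h]; simp [coeff_sub, coeff_add, coeff_mul_XP]; ring
  · show coeff (ex 0 2) (p * f) + coeff (ex 2 1) (p * f) + 2 * coeff (ex 4 0) (p * f) = 0
    rw [h]; simp [coeff_sub, coeff_add, coeff_mul_XP]; ring

lemma phi_mul_g (p : P2) : phi (p * g) = 0 := by
  have h : p * g = (p * XP 4 0 + p * XP 0 2) - (p * XP 2 1 + p * XP 2 1 + p * XP 2 1) := by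
    rw [g]; ring
  funext i
  fin_cases i
  · show coeff (ex 0 0) (p * g) = 0
    rw [h]; simp [coeff_sub, coeff_add, coeff_mul_XP]
  · show coeff (ex 1 0) (p * g) = 0
    rw [h]; simp [coeff_sub, coeff_add, coeff_mul_XP]
  · show coeff (ex 0 1) (p * g) = 0
    rw [h]; simp [coeff_sub, coeff_add, coeff_mul_XP]
  · show coeff (ex 2 0) (p * g) = 0
    rw [h]; simp [coeff_sub, coeff_add, coeff_mul_XP]
  · show coeff (ex 1 1) (p * g) + 2 * coeff (ex 3 0) (p * g) = 0
    rw [h]; simp [coeff_sub, coeff_add, coeff_mul_XP]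
  · show coeff (ex 0 2) (p * g) + coeff (ex 2 1) (p * g) + 2 * coeff (ex 4 0) (p * g) = 0
    rw [h]; simp [coeff_sub, coeff_add, coeff_mul_XP]; ring

lemma phi_vanish {q : P2} (hq : q ∈ Ideal.span {f, g}) : phi q = 0 := by
  rw [Ideal.mem_span_pair] at hq
  obtain ⟨a, b, rfl⟩ := hq
  rw [map_add, phi_mul_f, phi_mul_g, add_zero]

lemma coeff_zsmul (m : Fin 2 →₀ ℕ) (c : ℤ) (p : P2) :
    coeff m ((c : ℤ) • p) = c * coeff m p := coeff_smul m c p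

def Mi : Fin 6 → P2
  | 0 => XP 0 0
  | 1 => XP 1 0
  | 2 => XP 0 1
  | 3 => XP 2 0
  | 4 => XP 1 1
  | 5 => XP 2 1

lemma wdeg (m : Fin 2 →₀ ℕ) : Finsupp.weight ![1, 2] m = m 0 + 2 * m 1 := by
  rw [Finsupp.weight_apply, Finsupp.sum_fintype _ _ (by simp), Fin.sum_univ_two]
  simp only [smul_eq_mul, Matrix.cons_val_zero, Matrix.cons_val_one, Matrix.head_cons]
  ring

section Main
variable (I : Ideal P2)

lemma span_homog (d : ℕ) :
    Submodule.span ℤ (Ideal.Quotient.mk I '' {p | p.IsWeightedHomogeneous ![1, 2] d}) =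
    Submodule.span ℤ {q | ∃ a b : ℕ, a + 2 * b = d ∧ q = Ideal.Quotient.mk I (XP a b)} := by
  apply le_antisymm
  · rw [Submodule.span_le]
    rintro q ⟨p, hp, rfl⟩
    have hrep : p = ∑ m ∈ p.support, monomial m (coeff m p) := (support_sum_monomial_coeff p).symm
    rw [hrep, map_sum]
    apply Submodule.sum_mem
    intro m hm
    have hd : m 0 + 2 * m 1 = d := by
      rw [← wdeg m]
      exact hp (mem_support_iff.mp hm)
    have : monomial m (coeff m p) = (coeff m p) • XP (m 0) (m 1) := by
      rw [XP_eq_monomial, smul_monomial, smul_eq_mul, mul_one, ← eq_ex]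
    rw [this, map_zsmul]
    exact Submodule.smul_mem _ _ (Submodule.subset_span ⟨m 0, m 1, hd, rfl⟩)
  · rw [Submodule.span_le]
    rintro q ⟨a, b, hab, rfl⟩
    apply Submodule.subset_span
    refine ⟨XP a b, ?_, rfl⟩
    rw [XP_eq_monomial]
    apply isWeightedHomogeneous_monomial
    rw [wdeg]
    simpa using hab

set_option maxHeartbeats 1000000 in
lemma main (hI : I = Ideal.span {f, g}) (Qd : ℕ → Submodule ℤ (P2 ⧸ I))
    (hQd : ∀ d, Qd d = Submodule.span ℤ
      (Ideal.Quotient.mk I '' {p | p.IsWeightedHomogeneous ![1, 2] d})) :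
    Module.Free ℤ (P2 ⧸ I) ∧
    Module.Finite ℤ (P2 ⧸ I) ∧
    Module.finrank ℤ (P2 ⧸ I) = 6 ∧
    Module.finrank ℤ (Qd 0) = 1 ∧ Module.finrank ℤ (Qd 1) = 1 ∧
    Module.finrank ℤ (Qd 2) = 2 ∧ Module.finrank ℤ (Qd 3) = 1 ∧
    Module.finrank ℤ (Qd 4) = 1 := by
  classical
  set mk := Ideal.Quotient.mk I with hmk
  set v : Fin 6 → P2 ⧸ I := fun i => mk (Mi i) with hv
  have hfI : f ∈ I := by rw [hI]; exact Ideal.subset_span (by simp)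
  have hgI : g ∈ I := by rw [hI]; exact Ideal.subset_span (by simp)
  have hf0 : mk f = 0 := Ideal.Quotient.eq_zero_iff_mem.mpr hfI
  have hg0 : mk g = 0 := Ideal.Quotient.eq_zero_iff_mem.mpr hgI
  -- abbreviations in the quotient
  set x : P2 ⧸ I := mk (X 0) with hx
  set y : P2 ⧸ I := mk (X 1) with hy
  have hXP : ∀ a b : ℕ, mk (XP a b) = x ^ a * y ^ b := by
    intro a b; rw [XP, map_mul, map_pow, map_pow]
  have hf0' : 2 * (x * y) - x ^ 3 = 0 := by
    have : mk f = 2 * (x * y) - x ^ 3 := by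
      rw [f, map_sub, map_mul, map_ofNat, hXP, hXP]; ring
    rw [← this, hf0]
  have hg0' : x ^ 4 + y ^ 2 - 3 * (x ^ 2 * y) = 0 := by
    have : mk g = x ^ 4 + y ^ 2 - 3 * (x ^ 2 * y) := by
      rw [g, map_sub, map_add, map_mul, map_ofNat, hXP, hXP, hXP]; ring
    rw [← this, hg0]
  have rel1 : x ^ 3 = 2 * (x * y) := by linear_combination -hf0'
  have rel2 : y ^ 2 = x ^ 2 * y := by linear_combination hg0' + x * hf0'
  have rel3 : x ^ 3 * y = 0 := by linear_combination (-y) * rel1 + (-2*x) * rel2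
  have rel4 : x ^ 2 * y ^ 2 = 0 := by linear_combination x ^ 2 * rel2 + x * rel3
  -- values of v
  have v0 : v 0 = 1 := by rw [hv]; simp [Mi, hXP]
  have v1 : v 1 = x := by rw [hv]; simp [Mi, hXP]
  have v2 : v 2 = y := by rw [hv]; simp [Mi, hXP]
  have v3 : v 3 = x ^ 2 := by rw [hv]; simp [Mi, hXP]
  have v4 : v 4 = x * y := by rw [hv]; simp [Mi, hXP]
  have v5 : v 5 = x ^ 2 * y := by rw [hv]; simp [Mi, hXP]
  set T : Submodule ℤ (P2 ⧸ I) := Submodule.span ℤ (Set.range v) with hT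
  have hvT : ∀ i, v i ∈ T := fun i => Submodule.subset_span ⟨i, rfl⟩
  have hmulx : ∀ q ∈ T, q * x ∈ T := by
    intro q hq
    induction hq using Submodule.span_induction with
    | mem q hq =>
      obtain ⟨i, rfl⟩ := hq
      fin_cases i
      · show v 0 * x ∈ T
        rw [v0, one_mul, ← v1]; exact hvT 1
      · show v 1 * x ∈ T
        rw [v1, ← sq, ← v3]; exact hvT 3
      · show v 2 * x ∈ T
        rw [v2, mul_comm, ← v4]; exact hvT 4
      · show v 3 * x ∈ T
        rw [v3, show x ^ 2 * x = x ^ 3 by ring, rel1, two_mul, ← v4]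
        exact Submodule.add_mem _ (hvT 4) (hvT 4)
      · show v 4 * x ∈ T
        rw [v4, show x * y * x = x ^ 2 * y by ring, ← v5]; exact hvT 5
      · show v 5 * x ∈ T
        rw [v5, show x ^ 2 * y * x = x ^ 3 * y by ring, rel3]; exact Submodule.zero_mem _
    | zero => rw [zero_mul]; exact Submodule.zero_mem _
    | add a b _ _ ha hb => rw [add_mul]; exact Submodule.add_mem _ ha hb
    | smul c a _ ha => rw [smul_mul_assoc]; exact Submodule.smul_mem _ _ ha
  have hmuly : ∀ q ∈ T, q * y ∈ T := by
    intro q hq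
    induction hq using Submodule.span_induction with
    | mem q hq =>
      obtain ⟨i, rfl⟩ := hq
      fin_cases i
      · show v 0 * y ∈ T
        rw [v0, one_mul, ← v2]; exact hvT 2
      · show v 1 * y ∈ T
        rw [v1, ← v4]; exact hvT 4
      · show v 2 * y ∈ T
        rw [v2, ← sq, rel2, ← v5]; exact hvT 5
      · show v 3 * y ∈ T
        rw [v3, ← v5]; exact hvT 5
      · show v 4 * y ∈ T
        rw [v4, show x * y * y = x * y ^ 2 by ring, rel2,
          show x * (x ^ 2 * y) = x ^ 3 * y by ring, rel3]
        exact Submodule.zero_mem _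
      · show v 5 * y ∈ T
        rw [v5, show x ^ 2 * y * y = x ^ 2 * y ^ 2 by ring, rel4]; exact Submodule.zero_mem _
    | zero => rw [zero_mul]; exact Submodule.zero_mem _
    | add a b _ _ ha hb => rw [add_mul]; exact Submodule.add_mem _ ha hb
    | smul c a _ ha => rw [smul_mul_assoc]; exact Submodule.smul_mem _ _ ha
  have hall : ∀ p : P2, mk p ∈ T := by
    intro p
    induction p using MvPolynomial.induction_on with
    | C a =>
      have : (C a : P2) = a • 1 := by
        rw [zsmul_eq_mul, mul_one]; simp
      rw [this, map_zsmul, map_one, ← v0]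
      exact Submodule.smul_mem _ _ (hvT 0)
    | add p q hp hq => rw [map_add]; exact Submodule.add_mem _ hp hq
    | mul_X p i hp =>
      rw [map_mul]
      fin_cases i
      · exact hmulx _ hp
      · exact hmuly _ hp
  have hspan : ⊤ ≤ T := by
    intro q _
    obtain ⟨p, rfl⟩ := Ideal.Quotient.mk_surjective q
    exact hall p
  have hind : LinearIndependent ℤ v := by
    rw [Fintype.linearIndependent_iff]
    intro c hc
    have hmem : (∑ i, c i • Mi i) ∈ Ideal.span {f, g} := by
      rw [← hI, ← Ideal.Quotient.eq_zero_iff_mem]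
      have : mk (∑ i, c i • Mi i) = ∑ i, c i • v i := by
        rw [map_sum]; exact Finset.sum_congr rfl fun i _ => map_zsmul mk _ _
      rw [this, hc]
    have h0 : phi (∑ i, c i • Mi i) = 0 := phi_vanish hmem
    have hPc : phi (∑ i, c i • Mi i) = c := by
      funext j
      fin_cases j
      · show coeff (ex 0 0) (∑ i, c i • Mi i) = c 0
        rw [coeff_sum, Fin.sum_univ_six]
        simp only [Mi, coeff_zsmul, coeff_XP]
        norm_num
      · show coeff (ex 1 0) (∑ i, c i • Mi i) = c 1
        rw [coeff_sum, Fin.sum_univ_six]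
        simp only [Mi, coeff_zsmul, coeff_XP]
        norm_num
      · show coeff (ex 0 1) (∑ i, c i • Mi i) = c 2
        rw [coeff_sum, Fin.sum_univ_six]
        simp only [Mi, coeff_zsmul, coeff_XP]
        norm_num
      · show coeff (ex 2 0) (∑ i, c i • Mi i) = c 3
        rw [coeff_sum, Fin.sum_univ_six]
        simp only [Mi, coeff_zsmul, coeff_XP]
        norm_num
      · show coeff (ex 1 1) (∑ i, c i • Mi i) + 2 * coeff (ex 3 0) (∑ i, c i • Mi i) = c 4
        rw [coeff_sum, coeff_sum, Fin.sum_univ_six, Fin.sum_univ_six]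
        simp only [Mi, coeff_zsmul, coeff_XP]
        norm_num
      · show coeff (ex 0 2) (∑ i, c i • Mi i) + coeff (ex 2 1) (∑ i, c i • Mi i)
            + 2 * coeff (ex 4 0) (∑ i, c i • Mi i) = c 5
        rw [coeff_sum, coeff_sum, coeff_sum, Fin.sum_univ_six, Fin.sum_univ_six, Fin.sum_univ_six]
        simp only [Mi, coeff_zsmul, coeff_XP]
        norm_num
    intro i
    have : c = 0 := by rw [← hPc, h0]
    rw [this]; rfl
  have B : Module.Basis (Fin 6) ℤ (P2 ⧸ I) := Module.Basis.mk hind hspan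
  have hfree : Module.Free ℤ (P2 ⧸ I) := Module.Free.of_basis B
  have hfin : Module.Finite ℤ (P2 ⧸ I) := Module.Finite.of_basis B
  have hrank : Module.finrank ℤ (P2 ⧸ I) = 6 := by
    rw [Module.finrank_eq_card_basis B, Fintype.card_fin]
  have hsub : ∀ (n : ℕ) (u : Fin n → Fin 6), Function.Injective u →
      Module.finrank ℤ (Submodule.span ℤ (Set.range (v ∘ u))) = n := by
    intro n u hu
    rw [finrank_span_eq_card (hind.comp u hu), Fintype.card_fin]
  have hQ0 : Qd 0 = Submodule.span ℤ (Set.range (v ∘ (fun _ : Fin 1 => (0 : Fin 6)))) := by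
    rw [hQd 0, span_homog I 0]
    congr 1
    ext q
    constructor
    · rintro ⟨a, b, hab, rfl⟩
      obtain ⟨rfl, rfl⟩ : a = 0 ∧ b = 0 := by omega
      exact ⟨0, rfl⟩
    · rintro ⟨i, rfl⟩
      exact ⟨0, 0, rfl, rfl⟩
  have hQ1 : Qd 1 = Submodule.span ℤ (Set.range (v ∘ (fun _ : Fin 1 => (1 : Fin 6)))) := by
    rw [hQd 1, span_homog I 1]
    congr 1
    ext q
    constructor
    · rintro ⟨a, b, hab, rfl⟩
      obtain ⟨rfl, rfl⟩ : a = 1 ∧ b = 0 := by omega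
      exact ⟨0, rfl⟩
    · rintro ⟨i, rfl⟩
      exact ⟨1, 0, rfl, rfl⟩
  have hQ2 : Qd 2 = Submodule.span ℤ (Set.range (v ∘ ![3, 2])) := by
    rw [hQd 2, span_homog I 2]
    congr 1
    ext q
    constructor
    · rintro ⟨a, b, hab, rfl⟩
      obtain ⟨rfl, rfl⟩ | ⟨rfl, rfl⟩ : (a = 2 ∧ b = 0) ∨ (a = 0 ∧ b = 1) := by omega
      · exact ⟨0, rfl⟩
      · exact ⟨1, rfl⟩
    · rintro ⟨i, rfl⟩
      fin_cases i
      · exact ⟨2, 0, rfl, rfl⟩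
      · exact ⟨0, 1, rfl, rfl⟩
  have hr40 : mk (XP 4 0) = v 5 + v 5 := by
    rw [hXP, v5]; linear_combination x * rel1
  have hr02 : mk (XP 0 2) = v 5 := by
    rw [hXP, v5]; linear_combination rel2
  have hr30 : mk (XP 3 0) = v 4 + v 4 := by
    rw [hXP, v4]; linear_combination rel1
  have hQ3 : Qd 3 = Submodule.span ℤ (Set.range (v ∘ (fun _ : Fin 1 => (4 : Fin 6)))) := by
    rw [hQd 3, span_homog I 3, Set.range_comp, Set.range_const, Set.image_singleton]
    apply le_antisymm
    · rw [Submodule.span_le]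
      rintro q ⟨a, b, hab, rfl⟩
      obtain ⟨rfl, rfl⟩ | ⟨rfl, rfl⟩ : (a = 3 ∧ b = 0) ∨ (a = 1 ∧ b = 1) := by omega
      · rw [hr30]
        exact add_mem (Submodule.subset_span rfl) (Submodule.subset_span rfl)
      · exact Submodule.subset_span rfl
    · rw [Submodule.span_le]
      rintro q rfl
      exact Submodule.subset_span ⟨1, 1, rfl, rfl⟩
  have hQ4 : Qd 4 = Submodule.span ℤ (Set.range (v ∘ (fun _ : Fin 1 => (5 : Fin 6)))) := by
    rw [hQd 4, span_homog I 4, Set.range_comp, Set.range_const, Set.image_singleton]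
    apply le_antisymm
    · rw [Submodule.span_le]
      rintro q ⟨a, b, hab, rfl⟩
      obtain ⟨rfl, rfl⟩ | ⟨rfl, rfl⟩ | ⟨rfl, rfl⟩ :
          (a = 4 ∧ b = 0) ∨ (a = 2 ∧ b = 1) ∨ (a = 0 ∧ b = 2) := by omega
      · rw [hr40]
        exact add_mem (Submodule.subset_span rfl) (Submodule.subset_span rfl)
      · exact Submodule.subset_span rfl
      · rw [hr02]
        exact Submodule.subset_span rfl
    · rw [Submodule.span_le]
      rintro q rfl
      exact Submodule.subset_span ⟨2, 1, rfl, rfl⟩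
  refine ⟨hfree, hfin, hrank, ?_, ?_, ?_, ?_, ?_⟩
  · rw [hQ0]; exact hsub 1 _ (fun a b _ => Subsingleton.elim a b)
  · rw [hQ1]; exact hsub 1 _ (fun a b _ => Subsingleton.elim a b)
  · rw [hQ2]; exact hsub 2 ![3, 2] (by decide)
  · rw [hQ3]; exact hsub 1 _ (fun a b _ => Subsingleton.elim a b)
  · rw [hQ4]; exact hsub 1 _ (fun a b _ => Subsingleton.elim a b)

end Main
end
end Stmt15Aux


/-- The generator `c_i` of `ℤ[c_1, c_2]` for `i = 1, 2`, together with `c_0 = 1`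
and `c_i = 0` for `i > 2`. -/
noncomputable def chern (i : ℕ) : MvPolynomial (Fin 2) ℤ :=
  if h : i = 0 then 1 else if h2 : i ≤ 2 then X ⟨i - 1, by omega⟩ else 0

/-- with `c_1, c_2` of degrees `1, 2` and `c_j⁻¹ = inv j` the degree-`j`
component of the formal inverse of `1 + c_1 + c_2` (characterized by `inv 0 = 1` and
`∑_{i ≤ j} c_i · inv (j-i) = 0` for `j ≥ 1`), the quotient ring
`ℤ[c_1, c_2]/⟨c_3⁻¹, c_4⁻¹⟩` is a free abelian group of rank `6`, with one basis
element each in (weighted) degrees `0, 1, 3, 4` and two in degree `2`. -/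
theorem stmt15 (inv : ℕ → MvPolynomial (Fin 2) ℤ) (hinv0 : inv 0 = 1)
    (hinv : ∀ j : ℕ, 0 < j →
      ∑ i ∈ Finset.range (j + 1), chern i * inv (j - i) = 0)
    (I : Ideal (MvPolynomial (Fin 2) ℤ))
    (hI : I = Ideal.span {inv 3, inv 4})
    (Qd : ℕ → Submodule ℤ (MvPolynomial (Fin 2) ℤ ⧸ I))
    (hQd : ∀ d, Qd d = Submodule.span ℤ
      (Ideal.Quotient.mk I '' {p | p.IsWeightedHomogeneous ![1, 2] d})) :
    Module.Free ℤ (MvPolynomial (Fin 2) ℤ ⧸ I) ∧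
    Module.Finite ℤ (MvPolynomial (Fin 2) ℤ ⧸ I) ∧
    Module.finrank ℤ (MvPolynomial (Fin 2) ℤ ⧸ I) = 6 ∧
    Module.finrank ℤ (Qd 0) = 1 ∧ Module.finrank ℤ (Qd 1) = 1 ∧
    Module.finrank ℤ (Qd 2) = 2 ∧ Module.finrank ℤ (Qd 3) = 1 ∧
    Module.finrank ℤ (Qd 4) = 1 := by
  have c0 : chern 0 = 1 := by simp [chern]
  have c1 : chern 1 = X 0 := by simp [chern]
  have c2 : chern 2 = X 1 := by simp [chern]
  have c3 : chern 3 = 0 := by simp [chern]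
  have c4 : chern 4 = 0 := by simp [chern]
  have h1 := hinv 1 one_pos
  have h2 := hinv 2 (by norm_num)
  have h3 := hinv 3 (by norm_num)
  have h4 := hinv 4 (by norm_num)
  simp only [Finset.sum_range_succ, Finset.sum_range_zero, zero_add, hinv0, mul_one,
    c0, c1, c2, c3, c4, one_mul, zero_mul, add_zero, Nat.sub_self, Nat.sub_zero] at h1 h2 h3 h4
  norm_num at h1 h2 h3 h4
  have e1 : inv 1 = -(X 0) := by linear_combination h1
  have e2 : inv 2 = X 0 ^ 2 - X 1 := by linear_combination h2 - X 0 * e1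
  have ef : inv 3 = 2 * (X 0 ^ 1 * X 1 ^ 1) - X 0 ^ 3 * X 1 ^ 0 := by
    linear_combination h3 - X 0 * e2 - X 1 * e1
  have eg : inv 4 = X 0 ^ 4 * X 1 ^ 0 + X 0 ^ 0 * X 1 ^ 2 - 3 * (X 0 ^ 2 * X 1 ^ 1) := by
    linear_combination h4 - X 0 * ef - X 1 * e2
  have e3 : inv 3 = Stmt15Aux.f := by
    rw [Stmt15Aux.f_def, Stmt15Aux.XP_def, Stmt15Aux.XP_def]; exact ef
  have e4 : inv 4 = Stmt15Aux.g := by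
    rw [Stmt15Aux.g_def, Stmt15Aux.XP_def, Stmt15Aux.XP_def, Stmt15Aux.XP_def]; exact eg
  rw [e3, e4] at hI
  exact Stmt15Aux.main I hI Qd hQd
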